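/- Monotonicity of F_E: let q be a positive probability vector on Fin M, let a : Fin M → ℝ satisfy a i > 0 for all i, and let ζ, Δ, R be real numbers. For λ ≥ 0 set c i λ = Real.exp ((λ * Real.log (a i) + Real.log (q i)) / (λ + 1)), S λ = ∑ i, c i λ, and F_E λ = (1 / (λ + 1)) * (∑ i, c i λ * Real.log (a i / q i)) / S λ + Real.log (S λ) − ζ * Δ − R. Then F_E is monotone nondecreasing on the interval [0, ∞). -/
import Mathlib

open Finset Real

lemma gibbs_aux (n : ℕ) (p u : Fin n → ℝ) (hp : ∀ i, 0 < p i) (hp1 : ∑ i, p i = 1) :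
    ∑ i, p i * (u i - Real.log (p i)) ≤ Real.log (∑ i, Real.exp (u i)) := by
  have h := (strictConcaveOn_log_Ioi.concaveOn).le_map_sum
    (t := Finset.univ) (w := p) (p := fun i => Real.exp (u i) / p i)
    (fun i _ => (hp i).le) hp1
    (fun i _ => div_pos (Real.exp_pos _) (hp i))
  simp only [smul_eq_mul] at h
  calc ∑ i, p i * (u i - Real.log (p i))
      = ∑ i, p i * Real.log (Real.exp (u i) / p i) := by
        apply Finset.sum_congr rfl
        intro i _
        rw [Real.log_div (Real.exp_ne_zero _) (hp i).ne', Real.log_exp]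
    _ ≤ Real.log (∑ i, p i * (Real.exp (u i) / p i)) := h
    _ = Real.log (∑ i, Real.exp (u i)) := by
        congr 1
        apply Finset.sum_congr rfl
        intro i _
        rw [mul_div_assoc']
        exact mul_div_cancel_left₀ _ (hp i).ne'

lemma key_aux (M : ℕ) (hM : 1 ≤ M) (q : Fin M → ℝ) (hq : ∀ i, 0 < q i)
    (a : Fin M → ℝ) (ha : ∀ i, 0 < a i) (lam : ℝ) (hlam : 0 ≤ lam) :
    ∃ p : Fin M → ℝ, (∀ i, 0 < p i) ∧ (∑ i, p i = 1) ∧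
      ((1 / (lam + 1)) *
          (∑ i, Real.exp ((lam * Real.log (a i) + Real.log (q i)) / (lam + 1)) *
            Real.log (a i / q i)) /
          (∑ i, Real.exp ((lam * Real.log (a i) + Real.log (q i)) / (lam + 1))) +
        Real.log (∑ i, Real.exp ((lam * Real.log (a i) + Real.log (q i)) / (lam + 1)))
        = ∑ i, p i * (Real.log (a i) - Real.log (p i))) ∧
      (∀ r : Fin M → ℝ, (∀ i, 0 < r i) → (∑ i, r i = 1) →
        (∑ i, r i * (Real.log (a i) - Real.log (r i)))
          - (1/(lam+1)) * ∑ i, r i * (Real.log (a i) - Real.log (q i))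
        ≤ (∑ i, p i * (Real.log (a i) - Real.log (p i)))
          - (1/(lam+1)) * ∑ i, p i * (Real.log (a i) - Real.log (q i))) := by
  have hl1 : (0:ℝ) < lam + 1 := by linarith
  have hne : Nonempty (Fin M) := ⟨⟨0, hM⟩⟩
  set u : Fin M → ℝ := fun i => (lam * Real.log (a i) + Real.log (q i)) / (lam + 1) with hu_def
  set c : Fin M → ℝ := fun i => Real.exp (u i) with hc_def
  set S : ℝ := ∑ i, c i with hS_def
  have hS : 0 < S := Finset.sum_pos (fun i _ => Real.exp_pos _) Finset.univ_nonempty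
  set p : Fin M → ℝ := fun i => c i / S with hp_def
  have hppos : ∀ i, 0 < p i := fun i => div_pos (Real.exp_pos _) hS
  have hpsum : ∑ i, p i = 1 := by
    rw [hp_def]
    simp only
    rw [← Finset.sum_div, ← hS_def, div_self hS.ne']
  have hlogp : ∀ i, Real.log (p i) = u i - Real.log S := by
    intro i
    rw [hp_def]
    simp only
    rw [Real.log_div (Real.exp_ne_zero _) hS.ne', Real.log_exp]
  have hu : ∀ i, u i = Real.log (a i) - (Real.log (a i) - Real.log (q i)) / (lam + 1) := by
    intro i
    rw [hu_def]
    field_simp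
    ring
  -- the value of F at lam equals ∑ p i * (log a i - log p i)
  have hval : (1 / (lam + 1)) * (∑ i, c i * Real.log (a i / q i)) / S + Real.log S
      = ∑ i, p i * (Real.log (a i) - Real.log (p i)) := by
    have h1 : ∀ i, Real.log (a i / q i) = Real.log (a i) - Real.log (q i) := fun i =>
      Real.log_div (ha i).ne' (hq i).ne'
    have h2 : (1 / (lam + 1)) * (∑ i, c i * Real.log (a i / q i)) / S
        = ∑ i, p i * ((Real.log (a i) - Real.log (q i)) / (lam + 1)) := by
      have e : ∀ i, p i * ((Real.log (a i) - Real.log (q i)) / (lam + 1))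
          = (c i * Real.log (a i / q i)) * ((lam+1)⁻¹ * S⁻¹) := by
        intro i
        rw [h1 i, hp_def]
        simp only
        ring
      rw [Finset.sum_congr rfl (fun i _ => e i), ← Finset.sum_mul, div_eq_mul_inv, one_div]
      ring
    rw [h2]
    have h3 : ∀ i, p i * (Real.log (a i) - Real.log (p i))
        = p i * ((Real.log (a i) - Real.log (q i)) / (lam + 1)) + p i * Real.log S := by
      intro i
      rw [hlogp i, hu i]
      ring
    rw [Finset.sum_congr rfl (fun i _ => h3 i), Finset.sum_add_distrib, ← Finset.sum_mul, hpsum,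
      one_mul]
  -- the optimality of p
  have hId : ∀ (r : Fin M → ℝ), (∑ i, r i = 1) →
      (∑ i, r i * (Real.log (a i) - Real.log (r i)))
        - (1/(lam+1)) * ∑ i, r i * (Real.log (a i) - Real.log (q i))
      = ∑ i, r i * (u i - Real.log (r i)) := by
    intro r hr
    rw [Finset.mul_sum, ← Finset.sum_sub_distrib]
    apply Finset.sum_congr rfl
    intro i _
    rw [hu i]
    ring
  have hpval : ∑ i, p i * (u i - Real.log (p i)) = Real.log S := by
    have : ∀ i, p i * (u i - Real.log (p i)) = p i * Real.log S := by
      intro i; rw [hlogp i]; ring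
    rw [Finset.sum_congr rfl (fun i _ => this i), ← Finset.sum_mul, hpsum, one_mul]
  refine ⟨p, hppos, hpsum, hval, ?_⟩
  intro r hrpos hrsum
  rw [hId r hrsum, hId p hpsum, hpval]
  exact gibbs_aux M r u hrpos hrsum

theorem F_E_monotone (M : ℕ) (hM : 1 ≤ M)
    (q : Fin M → ℝ) (hq : ∀ i, 0 < q i) (hq1 : ∑ i, q i = 1)
    (a : Fin M → ℝ) (ha : ∀ i, 0 < a i)
    (ζ Δ R : ℝ) :
    MonotoneOn (fun lam : ℝ =>
      (1 / (lam + 1)) *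
          (∑ i, Real.exp ((lam * Real.log (a i) + Real.log (q i)) / (lam + 1)) *
            Real.log (a i / q i)) /
          (∑ i, Real.exp ((lam * Real.log (a i) + Real.log (q i)) / (lam + 1))) +
        Real.log (∑ i, Real.exp ((lam * Real.log (a i) + Real.log (q i)) / (lam + 1))) -
        ζ * Δ - R)
      (Set.Ici (0 : ℝ)) := by
  intro x hx y hy hxy
  rcases eq_or_lt_of_le hxy with rfl | hlt
  · exact le_refl _
  obtain ⟨p1, hp1pos, hp1s, hval1, hopt1⟩ := key_aux M hM q hq a ha x hx
  obtain ⟨p2, hp2pos, hp2s, hval2, hopt2⟩ := key_aux M hM q hq a ha y hy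
  simp only
  rw [sub_le_sub_iff_right, sub_le_sub_iff_right, hval1, hval2]
  have hA := hopt1 p2 hp2pos hp2s
  have hB := hopt2 p1 hp1pos hp1s
  have hx1 : (0:ℝ) < x + 1 := by have := hx; simp at this; linarith
  have hy1 : (0:ℝ) < y + 1 := by linarith
  have hs2 : (0:ℝ) < 1/(y+1) := by positivity
  have hslt : 1/(y+1) < 1/(x+1) := one_div_lt_one_div_of_lt hx1 (by linarith)
  set G1 := ∑ i, p1 i * (Real.log (a i) - Real.log (p1 i))
  set G2 := ∑ i, p2 i * (Real.log (a i) - Real.log (p2 i))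
  set D1 := ∑ i, p1 i * (Real.log (a i) - Real.log (q i))
  set D2 := ∑ i, p2 i * (Real.log (a i) - Real.log (q i))
  have hD : D1 ≤ D2 := by nlinarith [hA, hB, hslt]
  nlinarith [hB, mul_nonneg hs2.le (sub_nonneg.2 hD)]
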